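/- Let ℓ = {r + λ·v : λ ∈ ℝ} and ℓ' = {r' + λ'·v' : λ' ∈ ℝ} be two timelike lines in Minkowski space Mⁿ (n ≥ 2) whose direction vectors v, v' are timelike and linearly independent. Then there exists a unique pair of points (q, q') ∈ ℓ × ℓ' such that g(q − q', v) = 0 and g(q − q', v') = 0, i.e. such that q' is Einstein-simultaneous with q relative to ℓ and q is Einstein-simultaneous with q' relative to ℓ'. -/

import Mathlib

/-- The Minkowski bilinear form of signature `(1, n-1)` on `ℝⁿ`:
`g v w = v⁰w⁰ - ∑_{i=1}^{n-1} vⁱwⁱ`. -/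
noncomputable def minkG {n : ℕ} (v w : Fin n → ℝ) : ℝ :=
  ∑ i : Fin n, if (i : ℕ) = 0 then v i * w i else -(v i * w i)

lemma minkG_comm {n : ℕ} (v w : Fin n → ℝ) : minkG v w = minkG w v := by
  unfold minkG; congr 1; funext i; split <;> ring

lemma minkG_add_left {n : ℕ} (x y w : Fin n → ℝ) :
    minkG (x + y) w = minkG x w + minkG y w := by
  unfold minkG
  rw [← Finset.sum_add_distrib]
  congr 1; funext i
  simp only [Pi.add_apply]; split <;> ring

lemma minkG_smul_left {n : ℕ} (c : ℝ) (x w : Fin n → ℝ) :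
    minkG (c • x) w = c * minkG x w := by
  unfold minkG
  rw [Finset.mul_sum]
  congr 1; funext i
  simp only [Pi.smul_apply, smul_eq_mul]; split <;> ring

lemma minkG_neg_left {n : ℕ} (x w : Fin n → ℝ) :
    minkG (-x) w = - minkG x w := by
  have := minkG_smul_left (n := n) (-1) x w
  simpa using this

lemma minkG_sub_left {n : ℕ} (x y w : Fin n → ℝ) :
    minkG (x - y) w = minkG x w - minkG y w := by
  rw [sub_eq_add_neg, minkG_add_left, minkG_neg_left, sub_eq_add_neg]

lemma minkG_sub_right {n : ℕ} (w x y : Fin n → ℝ) :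
    minkG w (x - y) = minkG w x - minkG w y := by
  rw [minkG_comm, minkG_sub_left, minkG_comm x, minkG_comm y]

lemma minkG_smul_right {n : ℕ} (c : ℝ) (w x : Fin n → ℝ) :
    minkG w (c • x) = c * minkG w x := by
  rw [minkG_comm, minkG_smul_left, minkG_comm x]

/-- Decomposition of the Minkowski form into temporal and spatial parts. -/
lemma minkG_eq {n : ℕ} [NeZero n] (v w : Fin n → ℝ) :
    minkG v w = v 0 * w 0 - ∑ i ∈ Finset.univ.erase 0, v i * w i := by
  unfold minkG
  rw [← Finset.add_sum_erase _ _ (Finset.mem_univ (0 : Fin n))]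
  simp only [Fin.val_zero, if_true]
  rw [sub_eq_add_neg, ← Finset.sum_neg_distrib]
  congr 1
  refine Finset.sum_congr rfl fun i hi => ?_
  rw [if_neg]
  intro h
  exact (Finset.mem_erase.mp hi).1 (Fin.ext h)

/-- A nonzero vector Minkowski-orthogonal to a timelike vector is spacelike. -/
lemma spacelike_of_orthogonal {n : ℕ} [NeZero n] (v w : Fin n → ℝ)
    (hv : 0 < minkG v v) (how : minkG w v = 0) (hw : w ≠ 0) :
    minkG w w < 0 := by
  set s : Finset (Fin n) := Finset.univ.erase 0 with hs
  have hvv : v 0 * v 0 - ∑ i ∈ s, v i * v i = minkG v v := (minkG_eq v v).symm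
  have hwv : w 0 * v 0 - ∑ i ∈ s, w i * v i = minkG w v := (minkG_eq w v).symm
  have hww : minkG w w = w 0 * w 0 - ∑ i ∈ s, w i * w i := minkG_eq w w
  have hsv : (0:ℝ) ≤ ∑ i ∈ s, v i * v i :=
    Finset.sum_nonneg fun i _ => mul_self_nonneg _
  have hsw : (0:ℝ) ≤ ∑ i ∈ s, w i * w i :=
    Finset.sum_nonneg fun i _ => mul_self_nonneg _
  have hv0 : ∑ i ∈ s, v i * v i < v 0 * v 0 := by linarith
  have hv0pos : 0 < v 0 * v 0 := lt_of_le_of_lt hsv hv0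
  have hCS : (∑ i ∈ s, w i * v i) ^ 2 ≤
      (∑ i ∈ s, w i * w i) * ∑ i ∈ s, v i * v i := by
    have := Finset.sum_mul_sq_le_sq_mul_sq s (fun i => w i) (fun i => v i)
    simpa [sq] using this
  have hwv0 : w 0 * v 0 = ∑ i ∈ s, w i * v i := by linarith
  rcases eq_or_lt_of_le hsw with h0 | hpos
  · -- all spatial components of w vanish
    exfalso
    have hzero : ∀ i ∈ s, w i * w i = 0 := by
      intro i hi
      have := (Finset.sum_eq_zero_iff_of_nonneg
        (fun i _ => mul_self_nonneg (w i))).mp h0.symm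
      exact this i hi
    have hwi : ∀ i : Fin n, w i = 0 := by
      intro i
      by_cases hi0 : i = 0
      · subst hi0
        have hsum : ∑ i ∈ s, w i * v i = 0 :=
          Finset.sum_eq_zero fun i hi => by
            rw [mul_self_eq_zero.mp (hzero i hi)]; ring
        have : w 0 * v 0 = 0 := by rw [hwv0, hsum]
        rcases mul_eq_zero.mp this with h | h
        · exact h
        · exact absurd (by rw [h]; ring) (ne_of_gt hv0pos)
      · exact mul_self_eq_zero.mp (hzero i (Finset.mem_erase.mpr ⟨hi0, Finset.mem_univ i⟩))
    exact hw (funext hwi)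
  · -- spatial part of w nonzero
    have key : (w 0 * v 0) ^ 2 < (∑ i ∈ s, w i * w i) * (v 0 * v 0) := by
      calc (w 0 * v 0) ^ 2 = (∑ i ∈ s, w i * v i) ^ 2 := by rw [hwv0]
        _ ≤ (∑ i ∈ s, w i * w i) * ∑ i ∈ s, v i * v i := hCS
        _ < (∑ i ∈ s, w i * w i) * (v 0 * v 0) := by
            exact mul_lt_mul_of_pos_left hv0 hpos
    have : w 0 * w 0 < ∑ i ∈ s, w i * w i := by
      nlinarith [sq_nonneg (w 0)]
    linarith [hww]

/-- Reverse Cauchy–Schwarz for timelike vectors. -/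
lemma rev_cauchy_schwarz {n : ℕ} [NeZero n] (v v' : Fin n → ℝ)
    (hv : 0 < minkG v v) (hv' : 0 < minkG v' v')
    (hind : LinearIndependent ℝ ![v, v']) :
    minkG v v * minkG v' v' < minkG v v' ^ 2 := by
  set t : ℝ := minkG v v' / minkG v' v' with ht
  set w : Fin n → ℝ := v - t • v' with hwdef
  have hindep := linearIndependent_fin2.mp hind
  have hwne : w ≠ 0 := by
    intro h
    have : t • v' = v := by
      have := sub_eq_zero.mp h
      simpa using this.symm
    exact (hindep.2 t) (by simpa using this)
  have hwo : minkG w v' = 0 := by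
    rw [hwdef, minkG_sub_left, minkG_smul_left, ht]
    field_simp
    ring
  have hww : minkG w w < 0 := spacelike_of_orthogonal v' w hv' hwo hwne
  have hexp : minkG w w = minkG v v - minkG v v' ^ 2 / minkG v' v' := by
    rw [hwdef, minkG_sub_left, minkG_smul_left, minkG_sub_right, minkG_sub_right,
      minkG_smul_right, minkG_smul_right, minkG_comm v' v, ht]
    field_simp
    ring
  rw [hexp] at hww
  have h' : minkG v v < minkG v v' ^ 2 / minkG v' v' := by linarith
  calc minkG v v * minkG v' v' < (minkG v v' ^ 2 / minkG v' v') * minkG v' v' :=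
        mul_lt_mul_of_pos_right h' hv'
    _ = minkG v v' ^ 2 := by field_simp

/-- Given two timelike lines `ℓ = {r + λv}` and `ℓ' = {r' + λ'v'}`
with linearly independent timelike directions, there is a unique pair
`(q, q') ∈ ℓ × ℓ'` with `g(q − q', v) = 0` and `g(q − q', v') = 0`, i.e. such that `q'`
is Einstein-simultaneous with `q` relative to `ℓ` and vice versa. -/
theorem mutual_einstein_simultaneity (m : ℕ)
    (r v r' v' : Fin (m + 2) → ℝ)
    (hv : 0 < minkG v v) (hv' : 0 < minkG v' v')
    (hind : LinearIndependent ℝ ![v, v']) :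
    ∃! qq' : (Fin (m + 2) → ℝ) × (Fin (m + 2) → ℝ),
      (∃ lam : ℝ, qq'.1 = r + lam • v) ∧
      (∃ lam : ℝ, qq'.2 = r' + lam • v') ∧
      minkG (qq'.1 - qq'.2) v = 0 ∧ minkG (qq'.1 - qq'.2) v' = 0 := by
  set a := minkG v v with ha
  set b := minkG v v' with hb
  set d := minkG v' v' with hd
  set e1 := minkG (r - r') v with he1
  set e2 := minkG (r - r') v' with he2
  have hD : a * d < b ^ 2 := rev_cauchy_schwarz v v' hv hv' hind
  have hDne : b ^ 2 - a * d ≠ 0 := by linarith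
  set D := b ^ 2 - a * d with hDdef
  set lam0 : ℝ := (e1 * d - b * e2) / D with hlam0
  set mu0 : ℝ := (b * e1 - a * e2) / D with hmu0
  -- general expansion of the constraints along the lines
  have hexp : ∀ (l μ : ℝ) (w : Fin (m + 2) → ℝ),
      minkG ((r + l • v) - (r' + μ • v')) w =
        minkG (r - r') w + l * minkG v w - μ * minkG v' w := by
    intro l μ w
    have : (r + l • v) - (r' + μ • v') = ((r - r') + l • v) - μ • v' := by
      abel
    rw [this, minkG_sub_left, minkG_add_left, minkG_smul_left, minkG_smul_left]
  have hbv : minkG v' v = b := minkG_comm v' v ▸ rfl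
  refine ⟨⟨r + lam0 • v, r' + mu0 • v'⟩, ⟨⟨lam0, rfl⟩, ⟨mu0, rfl⟩, ?_, ?_⟩, ?_⟩
  · rw [hexp, hbv, ← he1, ← ha]
    rw [hlam0, hmu0]
    field_simp
    ring
  · rw [hexp, ← he2, ← hb, ← hd]
    rw [hlam0, hmu0]
    field_simp
    ring
  · rintro ⟨p, p'⟩ ⟨⟨l, hp⟩, ⟨μ, hp'⟩, h1, h2⟩
    simp only at hp hp' h1 h2
    subst hp; subst hp'
    rw [hexp, hbv, ← he1, ← ha] at h1
    rw [hexp, ← he2, ← hb, ← hd] at h2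
    have hl : l = lam0 := by
      rw [hlam0]
      rw [eq_div_iff hDne]
      rw [hDdef]
      linear_combination b * h2 - d * h1
    have hmu : μ = mu0 := by
      rw [hmu0]
      rw [eq_div_iff hDne]
      rw [hDdef]
      linear_combination a * h2 - b * h1
    rw [hl, hmu]
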